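/- The convex hull of all permutations of the vector (1-m, 1, 1, ..., 1) ∈ ℝ^{m+1} equals the set of points (x₀,...,x_m) with x₀ + ... + x_m = 1 and x_i ≤ 1 for all 0 ≤ i ≤ m. -/

import Mathlib

theorem convexHull_permutations_eq (m : ℕ) (hm : 1 ≤ m) :
    convexHull ℝ {w : Fin (m + 1) → ℝ | ∃ σ : Equiv.Perm (Fin (m + 1)),
        w = (fun i => if i = 0 then 1 - (m : ℝ) else 1) ∘ σ}
      = {x : Fin (m + 1) → ℝ | ∑ i, x i = 1 ∧ ∀ i, x i ≤ 1} := by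
  have hm' : (0:ℝ) < m := by exact_mod_cast hm
  apply Set.Subset.antisymm
  · apply convexHull_min
    · rintro w ⟨σ, rfl⟩
      constructor
      · simp only [Function.comp_apply]
        rw [Equiv.sum_comp σ (fun i => if i = 0 then 1 - (m:ℝ) else 1)]
        rw [Fin.sum_univ_succ]
        simp [Fin.succ_ne_zero]
      · intro i
        simp only [Function.comp_apply]
        split
        · linarith
        · exact le_refl 1
    · intro x hx y hy a b ha hb hab
      refine ⟨?_, ?_⟩
      · simp only [Pi.add_apply, Pi.smul_apply, smul_eq_mul]
        rw [Finset.sum_add_distrib, ← Finset.mul_sum, ← Finset.mul_sum, hx.1, hy.1]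
        linarith
      · intro i
        have h1 := hx.2 i
        have h2 := hy.2 i
        simp only [Pi.add_apply, Pi.smul_apply, smul_eq_mul]
        nlinarith
  · rintro x ⟨hsum, hle⟩
    set lam : Fin (m+1) → ℝ := fun j => (1 - x j) / m with hlam
    have hlamsum : ∑ j, lam j = 1 := by
      rw [hlam, ← Finset.sum_div, Finset.sum_sub_distrib, hsum]
      simp
      omega
    have hz : ∀ j : Fin (m+1), (fun i => if i = j then (1:ℝ)-(m:ℝ) else 1) ∈
        {w : Fin (m + 1) → ℝ | ∃ σ : Equiv.Perm (Fin (m + 1)),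
          w = (fun i => if i = 0 then 1 - (m : ℝ) else 1) ∘ σ} := by
      intro j
      refine ⟨Equiv.swap 0 j, funext fun i => ?_⟩
      simp only [Function.comp_apply]
      by_cases h : i = j
      · subst h; simp
      · by_cases h0 : i = 0
        · subst h0
          simp [Equiv.swap_apply_left, Ne.symm h, h]
        · rw [Equiv.swap_apply_of_ne_of_ne h0 h]
          simp [h, h0]
    have key : Finset.univ.centerMass lam
        (fun j => (fun i => if i = j then (1:ℝ)-(m:ℝ) else 1)) ∈
        convexHull ℝ {w : Fin (m + 1) → ℝ | ∃ σ : Equiv.Perm (Fin (m + 1)),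
          w = (fun i => if i = 0 then 1 - (m : ℝ) else 1) ∘ σ} := by
      apply Finset.centerMass_mem_convexHull
      · intro j _
        exact div_nonneg (by linarith [hle j]) hm'.le
      · rw [hlamsum]; exact one_pos
      · intro j _; exact hz j
    convert key using 1
    rw [Finset.centerMass_eq_of_sum_1 _ _ hlamsum]
    funext i
    rw [Finset.sum_apply]
    have step : ∀ j : Fin (m+1), (lam j • fun i => if i = j then (1:ℝ)-(m:ℝ) else 1) i
        = lam j - (if j = i then (m:ℝ) * lam j else 0) := by
      intro j
      simp only [Pi.smul_apply, smul_eq_mul]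
      by_cases h : j = i
      · subst h; simp; ring
      · simp [h, Ne.symm h]
    rw [Finset.sum_congr rfl fun j _ => step j, Finset.sum_sub_distrib, hlamsum,
      Finset.sum_ite_eq' Finset.univ i (fun j => (m:ℝ) * lam j)]
    simp [hlam]
    field_simp
    ring
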